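/- If I ⊆ [0, ∞) is a set such that I₊ satisfies the DCC, then the set D(I) = {a ≤ 1 : a = (m − 1 + f)/m for some positive integer m and some f ∈ I₊} satisfies the DCC. -/
import Mathlib


def IsDCC (S : Set ℝ) : Prop :=
  ∀ f : ℕ → ℝ, (∀ n, f n ∈ S) → Antitone f → ∃ N, ∀ n, N ≤ n → f n = f N

def IsACC (S : Set ℝ) : Prop :=
  ∀ f : ℕ → ℝ, (∀ n, f n ∈ S) → Monotone f → ∃ N, ∀ n, N ≤ n → f n = f N
def IPlus (I : Set ℝ) : Set ℝ :=
  {0} ∪ {s : ℝ | ∃ l : ℕ, 1 ≤ l ∧ ∃ i : Fin l → ℝ, (∀ k, i k ∈ I) ∧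
    s = ∑ k, i k ∧ 0 ≤ s ∧ s ≤ 1}

def DSet (I : Set ℝ) : Set ℝ :=
  {a : ℝ | a ≤ 1 ∧ ∃ m : ℕ, 0 < m ∧ ∃ f ∈ IPlus I, a = (m - 1 + f) / m}

lemma isWF_of_isDCC {S : Set ℝ} (h : IsDCC S) : S.IsWF := by
  rw [Set.isWF_iff_no_descending_seq]
  intro f hf hmem
  obtain ⟨N, hN⟩ := h f hmem hf.antitone
  exact absurd (hN (N + 1) (Nat.le_succ N)) (hf (Nat.lt_succ_self N)).ne

lemma isDCC_of_isWF {S : Set ℝ} (h : S.IsWF) : IsDCC S := by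
  intro f hf hanti
  have hR : (Set.range f).IsWF := h.mono (Set.range_subset_iff.2 hf)
  have hne : (Set.range f).Nonempty := ⟨f 0, Set.mem_range_self 0⟩
  obtain ⟨N, hN⟩ := hR.min_mem hne
  refine ⟨N, fun n hn => ?_⟩
  have h1 : f n ≤ f N := hanti hn
  have h2 : ¬ f n < hR.min hne := hR.not_lt_min hne (Set.mem_range_self n)
  rw [← hN] at h2
  linarith [not_lt.1 h2]

lemma aux_image_isWF {I : Set ℝ} (hWF : (IPlus I).IsWF) (m : ℕ) (hm : 0 < m) :
    ((fun x => ((m : ℝ) - 1 + x) / m) '' IPlus I).IsWF := by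
  rw [Set.isWF_iff_no_descending_seq]
  intro f hf hmemf
  choose ψ hψ hψeq using hmemf
  have hψeq' : ∀ n : ℕ, ((m : ℝ) - 1 + ψ n) / m = f n := fun n => hψeq n
  have hm' : (0 : ℝ) < m := by exact_mod_cast hm
  have hanti : StrictAnti ψ := by
    intro a b hab
    have hlt := hf hab
    rw [← hψeq' a, ← hψeq' b] at hlt
    have := (div_lt_div_iff₀ hm' hm').mp hlt
    nlinarith
  rw [Set.isWF_iff_no_descending_seq] at hWF
  exact hWF ψ hanti hψ

theorem dcc_DSet (I : Set ℝ) (hI0 : I ⊆ Set.Ici 0) (hI : IsDCC (IPlus I)) :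
    IsDCC (DSet I) := by
  apply isDCC_of_isWF
  have hWF : (IPlus I).IsWF := isWF_of_isDCC hI
  rw [Set.isWF_iff_no_descending_seq]
  intro g hg hmem
  have hpos : ∀ x ∈ IPlus I, 0 ≤ x := by
    rintro x (rfl | ⟨l, hl, i, hi, rfl, h0, h1⟩)
    · exact le_refl 0
    · exact h0
  choose hle m hm φ hφ heq using hmem
  have heq' : ∀ n : ℕ, g n = ((m n : ℝ) - 1 + φ n) / m n := fun n => heq n
  have hle' : ∀ n : ℕ, g n ≤ 1 := fun n => hle n
  have hg1 : g 1 < 1 := lt_of_lt_of_le (hg Nat.zero_lt_one) (hle' 0)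
  set B : ℕ := ⌈(1 - g 1)⁻¹⌉₊ with hB
  have hmB : ∀ n, 1 ≤ n → m n ∈ Finset.Icc 1 B := by
    intro n hn
    have hmn : (1 : ℝ) ≤ m n := by exact_mod_cast hm n
    have h0 : 0 ≤ φ n := hpos _ (hφ n)
    have hgn : g n ≤ g 1 := (hg.antitone) hn
    have hd : ((m n : ℝ) - 1) / m n ≤ g n := by
      rw [heq' n]
      apply div_le_div_of_nonneg_right _ (by linarith)
      · linarith
    have hineq : (m n : ℝ) * (1 - g 1) ≤ 1 := by
      have := hd.trans hgn
      rw [div_le_iff₀ (by linarith : (0:ℝ) < m n)] at this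
      nlinarith
    have hcast : (m n : ℝ) ≤ (1 - g 1)⁻¹ := by
      rw [inv_eq_one_div, le_div_iff₀ (by linarith : (0:ℝ) < 1 - g 1)]
      exact hineq
    have : (m n : ℝ) ≤ B := hcast.trans (Nat.le_ceil _)
    have hmB' : m n ≤ B := by exact_mod_cast this
    exact Finset.mem_Icc.mpr ⟨hm n, hmB'⟩
  set T : Set ℝ := (Finset.Icc 1 B).sup
      (fun k => (fun x => ((k : ℝ) - 1 + x) / k) '' IPlus I) with hT
  have hTWF : T.IsWF := by
    rw [hT, Finset.isWF_sup]
    intro k hk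
    exact aux_image_isWF hWF k (Finset.mem_Icc.mp hk).1
  rw [Set.isWF_iff_no_descending_seq] at hTWF
  refine hTWF (fun n => g (n + 1)) (fun a b hab => hg (by omega)) ?_
  intro n
  rw [hT, Finset.sup_set_eq_biUnion]
  refine Set.mem_biUnion (hmB (n + 1) (by omega)) ?_
  exact ⟨φ (n + 1), hφ (n + 1), (heq' (n + 1)).symm⟩
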